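/- Kleene's 3-valued logic K with truth constants is universal: the map sending each classical formula to a conjunctive normal form (where no clause contains both a variable and its negation, with ⊤, ⊥ for empty conjunctions/disjunctions) is a conservative translation from CPC into K. -/

import Mathlib

/-- Formulas in the connectives `∧, ∨, ¬, ⊤, ⊥` (a functionally complete set for CPC). -/
inductive KForm : Type
  | var : ℕ → KForm
  | bot : KForm
  | top : KForm
  | neg : KForm → KForm
  | and : KForm → KForm → KForm
  | or : KForm → KForm → KForm
  deriving DecidableEq

/-- Boolean evaluation. -/
def KForm.evalB (v : ℕ → Bool) : KForm → Bool
  | .var n => v n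
  | .bot => false
  | .top => true
  | .neg φ => !(φ.evalB v)
  | .and φ ψ => φ.evalB v && ψ.evalB v
  | .or φ ψ => φ.evalB v || ψ.evalB v

/-- The three truth values 0, *, 1 of the Kleene algebra A3. -/
inductive K3 : Type
  | zero : K3
  | half : K3
  | one : K3
  deriving DecidableEq

/-- The truth order 0 < * < 1 as natural numbers. -/
def K3.toNat : K3 → ℕ
  | .zero => 0
  | .half => 1
  | .one => 2

/-- Meet (min) in the truth order. -/
def K3.min (a b : K3) : K3 := if a.toNat ≤ b.toNat then a else b

/-- Join (max) in the truth order. -/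
def K3.max (a b : K3) : K3 := if a.toNat ≤ b.toNat then b else a

/-- Kleene negation. -/
def K3.not : K3 → K3
  | .zero => .one
  | .half => .half
  | .one => .zero

/-- Evaluation in the Kleene algebra A3. -/
def KForm.eval3 (v : ℕ → K3) : KForm → K3
  | .var n => v n
  | .bot => .zero
  | .top => .one
  | .neg φ => (φ.eval3 v).not
  | .and φ ψ => (φ.eval3 v).min (ψ.eval3 v)
  | .or φ ψ => (φ.eval3 v).max (ψ.eval3 v)

/-- Classical consequence (over the language `∧, ∨, ¬, ⊤, ⊥`). -/
def CpcK (Γ : Set KForm) (φ : KForm) : Prop :=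
  ∀ v : ℕ → Bool, (∀ ψ ∈ Γ, ψ.evalB v = true) → φ.evalB v = true

/-- Kleene's 3-valued logic: only `1` is designated. -/
def KleeneK (Γ : Set KForm) (φ : KForm) : Prop :=
  ∀ v : ℕ → K3, (∀ ψ ∈ Γ, ψ.eval3 v = .one) → φ.eval3 v = .one

/-- The logic of paradox LP: both `*` and `1` are designated. -/
def LPK (Γ : Set KForm) (φ : KForm) : Prop :=
  ∀ v : ℕ → K3, (∀ ψ ∈ Γ, ψ.eval3 v ≠ .zero) → φ.eval3 v ≠ .zero

/-- A literal: a variable index together with a sign (`true` = positive). -/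
def litForm (l : ℕ × Bool) : KForm :=
  if l.2 then .var l.1 else .neg (.var l.1)

/-- The disjunction of a clause (a list of literals); the empty clause is `⊥`. -/
def clauseForm (c : List (ℕ × Bool)) : KForm :=
  c.foldr (fun l ψ => .or (litForm l) ψ) .bot

/-- A clause is good if no variable occurs both positively and negatively in it. -/
def GoodClause (c : List (ℕ × Bool)) : Prop :=
  ∀ n : ℕ, ¬ ((n, true) ∈ c ∧ (n, false) ∈ c)

/-- The conjunction of a list of clauses; the empty conjunction is `⊤`. -/
def cnfForm (cs : List (List (ℕ × Bool))) : KForm :=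
  cs.foldr (fun c ψ => .and (clauseForm c) ψ) .top


/-! ### Auxiliary lemmas -/

def ofB : Bool → K3
  | false => .zero
  | true => .one

lemma K3.min_eq_one {a b : K3} : a.min b = K3.one ↔ a = .one ∧ b = .one := by
  cases a <;> cases b <;> decide

lemma K3.max_eq_one {a b : K3} : a.max b = K3.one ↔ a = .one ∨ b = .one := by
  cases a <;> cases b <;> decide

lemma eval3_ofB (v : ℕ → Bool) (φ : KForm) :
    φ.eval3 (fun n => ofB (v n)) = ofB (φ.evalB v) := by
  induction φ with
  | var n => rfl
  | bot => rfl
  | top => rfl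
  | neg φ ih => simp only [KForm.eval3, KForm.evalB, ih]; cases φ.evalB v <;> rfl
  | and φ ψ ih1 ih2 =>
      simp only [KForm.eval3, KForm.evalB, ih1, ih2]
      cases φ.evalB v <;> cases ψ.evalB v <;> rfl
  | or φ ψ ih1 ih2 =>
      simp only [KForm.eval3, KForm.evalB, ih1, ih2]
      cases φ.evalB v <;> cases ψ.evalB v <;> rfl

lemma litB_iff (n : ℕ) (b : Bool) (v : ℕ → Bool) :
    (litForm (n, b)).evalB v = true ↔ v n = b := by
  cases b <;> simp [litForm, KForm.evalB]

lemma clauseB_iff (c : List (ℕ × Bool)) (v : ℕ → Bool) :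
    (clauseForm c).evalB v = true ↔ ∃ l ∈ c, (litForm l).evalB v = true := by
  induction c with
  | nil => simp [clauseForm, KForm.evalB]
  | cons l c ih => simp [clauseForm, KForm.evalB, Bool.or_eq_true] at ih ⊢; rw [ih]

lemma clause3_iff (c : List (ℕ × Bool)) (v : ℕ → K3) :
    (clauseForm c).eval3 v = .one ↔ ∃ l ∈ c, (litForm l).eval3 v = .one := by
  induction c with
  | nil => simp [clauseForm, KForm.eval3]
  | cons l c ih => simp [clauseForm, KForm.eval3, K3.max_eq_one] at ih ⊢; rw [ih]

lemma cnfB_iff (cs : List (List (ℕ × Bool))) (v : ℕ → Bool) :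
    (cnfForm cs).evalB v = true ↔ ∀ c ∈ cs, (clauseForm c).evalB v = true := by
  induction cs with
  | nil => simp [cnfForm, KForm.evalB]
  | cons c cs ih => simp only [cnfForm] at ih; simp [cnfForm, KForm.evalB, Bool.and_eq_true, ih]

lemma cnf3_iff (cs : List (List (ℕ × Bool))) (v : ℕ → K3) :
    (cnfForm cs).eval3 v = .one ↔ ∀ c ∈ cs, (clauseForm c).eval3 v = .one := by
  induction cs with
  | nil => simp [cnfForm, KForm.eval3]
  | cons c cs ih => simp only [cnfForm] at ih; simp [cnfForm, KForm.eval3, K3.min_eq_one, ih]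

/-- free variables -/
def KForm.fvars : KForm → List ℕ
  | .var n => [n]
  | .bot => []
  | .top => []
  | .neg φ => φ.fvars
  | .and φ ψ => φ.fvars ++ ψ.fvars
  | .or φ ψ => φ.fvars ++ ψ.fvars

lemma evalB_congr (φ : KForm) (u v : ℕ → Bool) (h : ∀ n ∈ φ.fvars, u n = v n) :
    φ.evalB u = φ.evalB v := by
  induction φ with
  | var n => exact h n (by simp [KForm.fvars])
  | bot => rfl
  | top => rfl
  | neg φ ih => simp only [KForm.evalB]; rw [ih h]
  | and φ ψ ih1 ih2 =>
      simp only [KForm.evalB]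
      rw [ih1 (fun n hn => h n (by simp [KForm.fvars, hn])),
          ih2 (fun n hn => h n (by simp [KForm.fvars, hn]))]
  | or φ ψ ih1 ih2 =>
      simp only [KForm.evalB]
      rw [ih1 (fun n hn => h n (by simp [KForm.fvars, hn])),
          ih2 (fun n hn => h n (by simp [KForm.fvars, hn]))]

def asg (s : List ℕ) : ℕ → Bool := fun n => decide (n ∈ s)

/-- Truth-table CNF. -/
def theCNF (φ : KForm) : List (List (ℕ × Bool)) :=
  ((φ.fvars.dedup.sublists).filter (fun s => φ.evalB (asg s) = false)).map
    (fun s => φ.fvars.dedup.map (fun n => (n, ! asg s n)))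

lemma theCNF_good (φ : KForm) : ∀ c ∈ theCNF φ, GoodClause c := by
  intro c hc
  simp only [theCNF, List.mem_map, List.mem_filter] at hc
  obtain ⟨s, -, rfl⟩ := hc
  intro n ⟨h1, h2⟩
  simp only [List.mem_map] at h1 h2
  obtain ⟨m1, -, hm1⟩ := h1
  obtain ⟨m2, -, hm2⟩ := h2
  have e1 : m1 = n := (Prod.mk.injEq .. ▸ hm1).1
  have e2 : m2 = n := (Prod.mk.injEq .. ▸ hm2).1
  subst e1; subst e2
  have := (Prod.mk.injEq .. ▸ hm1).2
  have := (Prod.mk.injEq .. ▸ hm2).2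
  simp_all

lemma theCNF_correct (φ : KForm) (v : ℕ → Bool) :
    (cnfForm (theCNF φ)).evalB v = φ.evalB v := by
  rcases hv : φ.evalB v with _ | _
  · -- φ false under v : show the CNF is false
    rw [Bool.eq_false_iff]
    intro hcnf
    rw [cnfB_iff] at hcnf
    set s₀ := φ.fvars.dedup.filter (fun n => v n) with hs₀
    have hagree : ∀ n ∈ φ.fvars.dedup, asg s₀ n = v n := by
      intro n hn
      simp [asg, hs₀, List.mem_filter, hn]
    have hmem : s₀ ∈ φ.fvars.dedup.sublists :=
      List.mem_sublists.2 List.filter_sublist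
    have hfalse : φ.evalB (asg s₀) = false := by
      rw [evalB_congr φ (asg s₀) v (fun n hn => hagree n (List.mem_dedup.2 hn))]
      exact hv
    have hcl : (φ.fvars.dedup.map (fun n => (n, ! asg s₀ n))) ∈ theCNF φ := by
      simp only [theCNF, List.mem_map, List.mem_filter]
      exact ⟨s₀, ⟨hmem, by simp [hfalse]⟩, rfl⟩
    have := hcnf _ hcl
    rw [clauseB_iff] at this
    obtain ⟨l, hl, hlit⟩ := this
    simp only [List.mem_map] at hl
    obtain ⟨m, hm, rfl⟩ := hl
    rw [litB_iff] at hlit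
    rw [hagree m hm] at hlit
    cases v m <;> simp_all
  · -- φ true under v : show the CNF is true
    rw [cnfB_iff]
    intro c hc
    simp only [theCNF, List.mem_map, List.mem_filter] at hc
    obtain ⟨s, ⟨hs, hsf⟩, rfl⟩ := hc
    rw [clauseB_iff]
    by_contra hno
    push_neg at hno
    have hagree : ∀ n ∈ φ.fvars.dedup, v n = asg s n := by
      intro n hn
      have := hno (n, ! asg s n) (List.mem_map.2 ⟨n, hn, rfl⟩)
      rw [Ne, litB_iff] at this
      cases h : v n <;> cases h2 : asg s n <;> simp_all
    have : φ.evalB v = φ.evalB (asg s) :=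
      evalB_congr φ v (asg s) (fun n hn => hagree n (List.mem_dedup.2 hn))
    simp only [decide_eq_true_eq] at hsf
    rw [hv, hsf] at this
    exact Bool.noConfusion this

/-- Kleene's logic (with truth constants) is universal: any map sending each classical
formula to a classically equivalent conjunctive normal form in which no clause contains
a variable together with its negation is a conservative translation of CPC into K. -/
theorem kleene_universal :
    (∃ f : KForm → List (List (ℕ × Bool)),
      ∀ φ : KForm, (∀ c ∈ f φ, GoodClause c) ∧
        ∀ v : ℕ → Bool, (cnfForm (f φ)).evalB v = φ.evalB v) ∧
    (∀ f : KForm → List (List (ℕ × Bool)),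
      (∀ φ : KForm, (∀ c ∈ f φ, GoodClause c) ∧
        ∀ v : ℕ → Bool, (cnfForm (f φ)).evalB v = φ.evalB v) →
      ∀ (Γ : Set KForm) (φ : KForm),
        CpcK Γ φ ↔ KleeneK ((fun ψ => cnfForm (f ψ)) '' Γ) (cnfForm (f φ))) := by
  constructor
  · exact ⟨theCNF, fun φ => ⟨theCNF_good φ, theCNF_correct φ⟩⟩
  · intro f hf Γ φ
    constructor
    · -- CPC → Kleene
      intro hC v hprem
      rw [cnf3_iff]
      intro c hc
      rw [clause3_iff]
      by_contra hno
      push_neg at hno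
      -- define a boolean valuation falsifying clause c and extending v
      set b : ℕ → Bool := fun n =>
        if (n, false) ∈ c then true
        else if (n, true) ∈ c then false
        else decide (v n = .one) with hb
      -- premises hold under b
      have hpremB : ∀ ψ ∈ Γ, ψ.evalB b = true := by
        intro ψ hψ
        rw [← (hf ψ).2 b]
        rw [cnfB_iff]
        intro c' hc'
        have h30 : (cnfForm (f ψ)).eval3 v = .one := hprem _ ⟨ψ, hψ, rfl⟩
        rw [cnf3_iff] at h30
        have h3 := h30 c' hc'
        rw [clause3_iff] at h3
        obtain ⟨⟨m, sgn⟩, hl, hlit⟩ := h3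
        rw [clauseB_iff]
        refine ⟨(m, sgn), hl, ?_⟩
        rw [litB_iff]
        cases sgn with
        | true =>
            -- v m = one
            have hvm : v m = .one := by
              simpa [litForm, KForm.eval3] using hlit
            have hnf : (m, false) ∉ c → (m, true) ∉ c := by
              intro _ htc
              exact hno (m, true) htc (by simpa [litForm, KForm.eval3] using hvm)
            by_cases h1 : (m, false) ∈ c
            · simp [hb, h1]
            · simp [hb, h1, hnf h1, hvm]
        | false =>
            -- v m = zero
            have hvm : v m = .zero := by
              have : (v m).not = .one := by simpa [litForm, KForm.eval3] using hlit
              cases h : v m <;> simp_all [K3.not]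
            have h1 : (m, false) ∉ c := by
              intro htc
              exact hno (m, false) htc (by simp [litForm, KForm.eval3, hvm, K3.not])
            by_cases h2 : (m, true) ∈ c
            · simp [hb, h1, h2]
            · simp [hb, h1, h2, hvm]
      -- conclusion under b
      have hconc : (clauseForm c).evalB b = true := by
        have := hC b hpremB
        rw [← (hf φ).2 b, cnfB_iff] at this
        exact this c hc
      rw [clauseB_iff] at hconc
      obtain ⟨⟨m, sgn⟩, hl, hlit⟩ := hconc
      rw [litB_iff] at hlit
      have hgood := (hf φ).1 c hc m
      cases sgn with
      | true =>
          have h1 : (m, false) ∉ c := fun h => hgood ⟨hl, h⟩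
          simp [hb, h1, hl] at hlit
      | false =>
          simp [hb, hl] at hlit
    · -- Kleene → CPC
      intro hK v hprem
      have := hK (fun n => ofB (v n)) ?_
      · rw [eval3_ofB] at this
        rw [(hf φ).2 v] at this
        cases h : φ.evalB v
        · rw [h] at this; exact absurd this (by simp [ofB])
        · rfl
      · rintro ψ' ⟨ψ, hψ, rfl⟩
        rw [eval3_ofB, (hf ψ).2 v, hprem ψ hψ]
        rfl
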